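/- Let Z ⊆ ℝ^d and define AZ° to be the set of probability vectors λ ∈ Δ_d such that ⟨λ↓, z↑⟩ ≥ 0 for all z ∈ Z, where λ↓ and z↑ denote decreasing and increasing rearrangements. If λ ∈ AZ° and μ ∈ Δ_d is majorized by λ, then μ ∈ AZ°. -/

import Mathlib

open Finset

/-- The increasing rearrangement of a vector. -/
noncomputable def asc {d : ℕ} (v : Fin d → ℝ) : Fin d → ℝ :=
  fun i => v (Tuple.sort v i)

/-- The decreasing rearrangement of a vector. -/
noncomputable def desc {d : ℕ} (v : Fin d → ℝ) : Fin d → ℝ :=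
  fun i => asc v i.rev

lemma asc_monotone {d : ℕ} (v : Fin d → ℝ) : Monotone (asc v) :=
  Tuple.monotone_sort v

lemma key_lemma {d : ℕ} (hd : 0 < d) (a b B : Fin d → ℝ) (hB : Monotone B)
    (htot : ∑ i, a i = ∑ i, b i)
    (hpart : ∀ m : ℕ, ∑ i ∈ univ.filter (fun i : Fin d => (i : ℕ) < m), a i
        ≤ ∑ i ∈ univ.filter (fun i : Fin d => (i : ℕ) < m), b i) :
    ∑ i, b i * B i ≤ ∑ i, a i * B i := by
  classical
  set g1 : ℕ → ℝ := fun j => if h : j < d then a ⟨j, h⟩ else 0 with hg1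
  set g2 : ℕ → ℝ := fun j => if h : j < d then b ⟨j, h⟩ else 0 with hg2
  set f : ℕ → ℝ := fun k => B ⟨min k (d - 1), by omega⟩ with hf
  have hfmono : Monotone f := by
    intro x y hxy
    exact hB (by simp [Fin.le_def]; omega)
  -- partial sums equality with filter sums
  have hsum1 : ∀ (c : Fin d → ℝ) (g : ℕ → ℝ), (∀ j (h : j < d), g j = c ⟨j, h⟩) →
      (∀ j, ¬ j < d → g j = 0) →
      ∀ m : ℕ, ∑ j ∈ range m, g j
        = ∑ i ∈ univ.filter (fun i : Fin d => (i : ℕ) < m), c i := by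
    intro c g hgc hg0 m
    have h1 : ∑ i ∈ univ.filter (fun i : Fin d => (i : ℕ) < m), c i
        = ∑ i : Fin d, (fun k : ℕ => if k < m then g k else 0) (i : ℕ) := by
      rw [Finset.sum_filter]
      refine Finset.sum_congr rfl fun i _ => ?_
      by_cases h : (i : ℕ) < m <;> simp [h, hgc _ i.isLt]
    have h1' : ∑ i : Fin d, (fun k : ℕ => if k < m then g k else 0) (i : ℕ)
        = ∑ j ∈ range d, (if j < m then g j else 0) :=
      Fin.sum_univ_eq_sum_range (fun k : ℕ => if k < m then g k else 0) d
    rw [h1, h1']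
    have h2 : ∑ j ∈ range d, (if j < m then g j else 0)
        = ∑ j ∈ (range d).filter (· < m), g j := (Finset.sum_filter _ _).symm
    have h3 : ∑ j ∈ range m, g j = ∑ j ∈ (range m).filter (· < d), g j := by
      rw [← Finset.sum_filter_add_sum_filter_not (range m) (· < d) g]
      have : ∑ j ∈ (range m).filter (fun j => ¬ j < d), g j = 0 :=
        Finset.sum_eq_zero fun j hj => hg0 j (Finset.mem_filter.mp hj).2
      rw [this, add_zero]
    rw [h2, h3]
    congr 1
    ext x
    simp only [Finset.mem_filter, Finset.mem_range]
    tauto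
  have hS1 := hsum1 a g1 (fun j h => by simp [hg1, h]) (fun j h => by simp [hg1, h])
  have hS2 := hsum1 b g2 (fun j h => by simp [hg2, h]) (fun j h => by simp [hg2, h])
  -- totals
  have htotfilt : ∀ c : Fin d → ℝ,
      ∑ i ∈ univ.filter (fun i : Fin d => (i : ℕ) < d), c i = ∑ i, c i := by
    intro c
    apply Finset.sum_congr _ (fun _ _ => rfl)
    simp [Finset.filter_true_of_mem, Fin.isLt]
  -- express the sums via range
  have hconv : ∀ (c : Fin d → ℝ) (g : ℕ → ℝ), (∀ j (h : j < d), g j = c ⟨j, h⟩) →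
      ∑ i, c i * B i = ∑ j ∈ range d, f j • g j := by
    intro c g hgc
    rw [← Fin.sum_univ_eq_sum_range (fun j => f j • g j) d]
    refine Finset.sum_congr rfl fun i _ => ?_
    have h1 : f (i : ℕ) = B i := by
      simp only [hf]
      congr 1
      ext
      simp
      omega
    have h2 : g (i : ℕ) = c i := by rw [hgc _ i.isLt]
    rw [h1, h2, smul_eq_mul, mul_comm]
  rw [hconv a g1 (fun j h => by simp [hg1, h]), hconv b g2 (fun j h => by simp [hg2, h])]
  rw [Finset.sum_range_by_parts f g1 d, Finset.sum_range_by_parts f g2 d]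
  have htots : ∑ i ∈ range d, g2 i = ∑ i ∈ range d, g1 i := by
    rw [hS1, hS2, htotfilt, htotfilt, htot]
  rw [htots]
  apply sub_le_sub_left
  apply Finset.sum_le_sum
  intro i _
  have hff : 0 ≤ f (i + 1) - f i := sub_nonneg.mpr (hfmono (Nat.le_succ i))
  have := hpart (i + 1)
  rw [← hS1, ← hS2] at this
  simp only [smul_eq_mul]
  exact mul_le_mul_of_nonneg_left this hff

theorem stmt16 (d : ℕ) (Z : Set (Fin d → ℝ))
    (lam mu : Fin d → ℝ)
    (hlamnn : ∀ i, 0 ≤ lam i) (hlamsum : ∑ i, lam i = 1)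
    (hmunn : ∀ i, 0 ≤ mu i) (hmusum : ∑ i, mu i = 1)
    (hmem : ∀ z ∈ Z, 0 ≤ ∑ i, desc lam i * asc z i)
    (hmaj : ∀ m : ℕ, ∑ i ∈ univ.filter (fun i : Fin d => (i : ℕ) < m), desc mu i
        ≤ ∑ i ∈ univ.filter (fun i : Fin d => (i : ℕ) < m), desc lam i) :
    ∀ z ∈ Z, 0 ≤ ∑ i, desc mu i * asc z i := by
  intro z hz
  rcases Nat.eq_zero_or_pos d with hd | hd
  · subst hd; simp
  have hsum_desc : ∀ v : Fin d → ℝ, ∑ i, desc v i = ∑ i, v i := by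
    intro v
    unfold desc
    have h1 : ∑ i, asc v (Fin.revPerm i) = ∑ i, asc v i :=
      Equiv.sum_comp Fin.revPerm (asc v)
    have h2 : ∑ i, v (Tuple.sort v i) = ∑ i, v i :=
      Equiv.sum_comp (Tuple.sort v) v
    exact h1.trans h2
  have htot : ∑ i, desc mu i = ∑ i, desc lam i := by
    rw [hsum_desc, hsum_desc, hmusum, hlamsum]
  have := key_lemma hd (desc mu) (desc lam) (asc z) (asc_monotone z) htot hmaj
  exact le_trans (hmem z hz) this
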